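/- Failure of the validity condition for the standard two-stage CMR score (part of Proposition 1): Suppose Y and F are square-integrable real random variables on (Ω, 𝓕, μ) satisfying the conditional moment restriction μ[Y − F | m] = 0 μ-almost everywhere. Then μ[F | m] = μ[Y | m] μ-almost everywhere, and consequently ∫ (Y − μ[F|m])² dμ = ∫ (Y − μ[Y|m])² dμ. In particular, if ∫ (Y − μ[Y|m])² dμ > 0 (the outcome has nondegenerate noise given C), then the expected standard score at the true functions, ∫ (Y − g₀)² dμ with g₀ := μ[F|m], is strictly positive, so the basic requirement E[ψ] = 0 of Neyman orthogonality fails for the standard score ℓ = (Y − g(f,C))². -/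

import Mathlib

open MeasureTheory

/-- Failure of the validity condition for the standard two-stage CMR score:
under the conditional moment restriction `μ[Y - F | m] = 0` a.e., one has
`μ[F|m] = μ[Y|m]` a.e., hence `∫ (Y - μ[F|m])² dμ = ∫ (Y - μ[Y|m])² dμ`; in
particular, if the latter is strictly positive then so is the expected
standard score at the true functions. -/
theorem standard_score_not_valid
    {Ω : Type*} {m 𝓕 : MeasurableSpace Ω} (hm : m ≤ 𝓕)
    {μ : Measure Ω} [IsProbabilityMeasure μ]
    (Y F : Ω → ℝ) (hY : MemLp Y 2 μ) (hF : MemLp F 2 μ)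
    (hCMR : μ[Y - F|m] =ᵐ[μ] 0) :
    (μ[F|m] =ᵐ[μ] μ[Y|m]) ∧
    (∫ ω, (Y ω - (μ[F|m]) ω) ^ 2 ∂μ = ∫ ω, (Y ω - (μ[Y|m]) ω) ^ 2 ∂μ) ∧
    (0 < ∫ ω, (Y ω - (μ[Y|m]) ω) ^ 2 ∂μ →
      0 < ∫ ω, (Y ω - (μ[F|m]) ω) ^ 2 ∂μ) := by
  have hYi : Integrable Y μ := hY.integrable (by norm_num)
  have hFi : Integrable F μ := hF.integrable (by norm_num)
  have hsub : μ[Y - F|m] =ᵐ[μ] μ[Y|m] - μ[F|m] := condExp_sub hYi hFi m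
  have h1 : μ[F|m] =ᵐ[μ] μ[Y|m] := by
    filter_upwards [hsub, hCMR] with ω h h0
    have : (μ[Y|m]) ω - (μ[F|m]) ω = 0 := by
      rw [← Pi.sub_apply, ← h, h0]; rfl
    linarith
  have h2 : ∫ ω, (Y ω - (μ[F|m]) ω) ^ 2 ∂μ = ∫ ω, (Y ω - (μ[Y|m]) ω) ^ 2 ∂μ := by
    refine integral_congr_ae ?_
    filter_upwards [h1] with ω h
    rw [h]
  exact ⟨h1, h2, fun h => h2 ▸ h⟩
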